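/- Let d be a non-negative integer. Suppose that G[2] is finite, that G/2G is finite with Nat.card (G/2G) = 2^(2d) · Nat.card G[2], that the kernel G'[φ'] is finite, and that Nat.card G[2] · (Nat.card (G'[φ'] / φ(G[ε])))² · Nat.card (G[ε] / ε(G[2])) = 2⁴. Then the quotients G'/φ(G) and G/φ'(G') are finite and Nat.card (G'/φ(G)) · Nat.card (G/φ'(G')) = 2^(2+d). -/

import Mathlib

/-- Key counting identity: for `f : A →+ B`, `g : B →+ C`,
the index of `f.range` factors through the kernel/image data of `g`. -/
private lemma index_range_eq {A B C : Type*} [AddCommGroup A] [AddCommGroup B] [AddCommGroup C]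
    (f : A →+ B) (g : B →+ C) :
    f.range.index =
      (AddSubgroup.map f (g.comp f).ker).relIndex g.ker *
        (g.comp f).range.relIndex g.range := by
  have hmap : AddSubgroup.map f (g.comp f).ker = f.range ⊓ g.ker := by
    ext y
    simp only [AddSubgroup.mem_map, AddMonoidHom.mem_ker, AddMonoidHom.coe_comp,
      Function.comp_apply, AddSubgroup.mem_inf, AddMonoidHom.mem_range]
    constructor
    · rintro ⟨x, hx, rfl⟩; exact ⟨⟨x, rfl⟩, hx⟩
    · rintro ⟨⟨x, rfl⟩, hx⟩; exact ⟨x, hx, rfl⟩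
  have hcomap : ((g.comp f).range).comap g = f.range ⊔ g.ker := by
    ext x
    simp only [AddSubgroup.mem_comap, AddMonoidHom.mem_range, AddMonoidHom.coe_comp,
      Function.comp_apply]
    constructor
    · rintro ⟨a, ha⟩
      have hz : x - f a ∈ g.ker := by
        simp [AddMonoidHom.mem_ker, map_sub, ha]
      have hx : x = f a + (x - f a) := by abel
      rw [hx]
      exact AddSubgroup.add_mem_sup (AddMonoidHom.mem_range.2 ⟨a, rfl⟩) hz
    · intro hx
      obtain ⟨y, hy, z, hz, rfl⟩ := AddSubgroup.mem_sup.1 hx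
      obtain ⟨a, rfl⟩ := hy
      exact ⟨a, by simp [AddMonoidHom.mem_ker.1 hz]⟩
  have hle : f.range ≤ ((g.comp f).range).comap g := by
    rintro y ⟨a, rfl⟩; exact ⟨a, rfl⟩
  calc f.range.index
      = f.range.relIndex (((g.comp f).range).comap g) * (((g.comp f).range).comap g).index :=
        (AddSubgroup.relIndex_mul_index hle).symm
    _ = f.range.relIndex g.ker * (g.comp f).range.relIndex g.range := by
        rw [AddSubgroup.index_comap, hcomap, AddSubgroup.relIndex_sup_left]
    _ = (AddSubgroup.map f (g.comp f).ker).relIndex g.ker *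
          (g.comp f).range.relIndex g.range := by
        rw [hmap, AddSubgroup.inf_relIndex_right]

theorem local_card_bound {G G' : Type*} [AddCommGroup G] [AddCommGroup G']
    (φ : G →+ G') (φ' : G' →+ G)
    (hε : (φ'.comp φ).comp (φ'.comp φ) = 2 • AddMonoidHom.id G)
    (d : ℕ)
    (h2tor : Finite (AddMonoidHom.ker (2 • AddMonoidHom.id G)))
    (h2quot : Finite (G ⧸ (2 • AddMonoidHom.id G).range))
    (hPhi : Nat.card (G ⧸ (2 • AddMonoidHom.id G).range) =
      2 ^ (2 * d) * Nat.card (AddMonoidHom.ker (2 • AddMonoidHom.id G)))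
    (hker : Finite φ'.ker)
    (hcard :
      Nat.card (AddMonoidHom.ker (2 • AddMonoidHom.id G)) *
        Nat.card (φ'.ker ⧸
          ((AddSubgroup.map φ (AddMonoidHom.ker (φ'.comp φ))).addSubgroupOf φ'.ker)) ^ 2 *
        Nat.card ((AddMonoidHom.ker (φ'.comp φ)) ⧸
          ((AddSubgroup.map (φ'.comp φ) (AddMonoidHom.ker (2 • AddMonoidHom.id G))).addSubgroupOf
            (AddMonoidHom.ker (φ'.comp φ)))) = 2 ^ 4) :
    Finite (G' ⧸ φ.range) ∧ Finite (G ⧸ φ'.range) ∧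
      Nat.card (G' ⧸ φ.range) * Nat.card (G ⧸ φ'.range) = 2 ^ (2 + d) := by
  set ε := φ'.comp φ with hεdef
  set two := (2 • AddMonoidHom.id G : G →+ G) with htwo
  -- pointwise form of hε
  have hεpt : ∀ x : G, ε (ε x) = two x := fun x => congrFun (congrArg DFunLike.coe hε) x
  -- basic subgroup inclusions
  have hkerle : ε.ker ≤ two.ker := by
    intro x hx
    have : ε (ε x) = 0 := by rw [AddMonoidHom.mem_ker.1 hx, map_zero]
    simpa [hεpt x] using this
  have hrange1 : ε.range ≤ φ'.range := by rintro y ⟨x, rfl⟩; exact ⟨φ x, rfl⟩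
  have hrange2 : two.range ≤ ε.range := by
    rintro y ⟨x, rfl⟩; exact ⟨ε x, hεpt x⟩
  -- abbreviations for the cardinalities
  set m := (AddSubgroup.map φ ε.ker).relIndex φ'.ker with hm
  set n := (AddSubgroup.map ε two.ker).relIndex ε.ker with hn
  set t := Nat.card two.ker with ht
  set a := φ.range.index with ha
  set b := φ'.range.index with hb
  set c := ε.range.index with hc
  set c2 := two.range.index with hc2
  -- the twoapplications of the key lemma
  have e1 : a = m * (ε.range.relIndex φ'.range) := index_range_eq φ φ'
  have e3 : c = n * (two.range.relIndex ε.range) := by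
    have := index_range_eq ε ε
    rwa [hε] at this
  have e2 : (ε.range.relIndex φ'.range) * b = c := AddSubgroup.relIndex_mul_index hrange1
  have e4 : (two.range.relIndex ε.range) * c = c2 := AddSubgroup.relIndex_mul_index hrange2
  -- translate hypotheses
  have e5 : c2 = 2 ^ (2 * d) * t := hPhi
  have hc16 : t * m ^ 2 * n = 2 ^ 4 := hcard
  -- nonvanishing
  have htne : t ≠ 0 := by
    have : Nonempty two.ker := ⟨0⟩
    exact Nat.card_ne_zero.2 ⟨this, h2tor⟩
  have hεker : Finite ε.ker :=
    Finite.of_injective _ (AddSubgroup.inclusion_injective hkerle)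
  have hmne : m ≠ 0 := by
    have : Finite (φ'.ker ⧸ ((AddSubgroup.map φ ε.ker).addSubgroupOf φ'.ker)) :=
      Quotient.finite _
    exact Nat.card_ne_zero.2 ⟨⟨0⟩, this⟩
  have hnne : n ≠ 0 := by
    have : Finite (ε.ker ⧸ ((AddSubgroup.map ε two.ker).addSubgroupOf ε.ker)) :=
      Quotient.finite _
    exact Nat.card_ne_zero.2 ⟨⟨0⟩, this⟩
  have hc2ne : c2 ≠ 0 := Nat.card_ne_zero.2 ⟨⟨0⟩, h2quot⟩
  have hcne : c ≠ 0 := by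
    intro h; rw [h, mul_zero] at e4; exact hc2ne e4.symm
  have hr1ne : ε.range.relIndex φ'.range ≠ 0 := by
    intro h; rw [h, zero_mul] at e2; exact hcne e2.symm
  have hbne : b ≠ 0 := by
    intro h; rw [h, mul_zero] at e2; exact hcne e2.symm
  have hane : a ≠ 0 := by
    rw [e1]; exact mul_ne_zero hmne hr1ne
  -- finiteness conclusions
  have hfin1 : Finite (G' ⧸ φ.range) := Nat.finite_of_card_ne_zero hane
  have hfin2 : Finite (G ⧸ φ'.range) := Nat.finite_of_card_ne_zero hbne
  refine ⟨hfin1, hfin2, ?_⟩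
  -- the count: (a*b)^2 = (2^(2+d))^2
  have hab : a * b = m * c := by rw [e1, mul_assoc, e2]
  have hcc : c * c = n * c2 := by
    nth_rewrite 1 [e3]
    rw [mul_assoc, e4]
  have hsq : (a * b) ^ 2 = (2 ^ (2 + d)) ^ 2 := by
    have : (a * b) ^ 2 = t * m ^ 2 * n * 2 ^ (2 * d) := by
      rw [hab]
      have : (m * c) ^ 2 = m ^ 2 * (c * c) := by ring
      rw [this, hcc, e5]
      ring
    rw [this, hc16, ← pow_add, ← pow_mul]
    congr 1
    ring
  have := Nat.pow_left_injective (two_ne_zero) hsq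
  exact this
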